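/- arXiv:1502.04843 — 5 statements merged into one kernel-verified Lean document; each statement's English description precedes it below -/
import Mathlib

section
/- For every time series x ∈ ℝ^k with 1 ≤ k ≤ n and every elasticity m ≥ 1, the elastic inner product W ↦ σ_W(x) is a convex function on ℝ^{n×m}; consequently, for fixed x the elastic linear function (W, b) ↦ b + σ_W(x) is convex on ℝ^{n×m} × ℝ. -/
/-- A warping path in the grid `[k] × [m]` (1-based points): starts at `(1,1)`,
ends at `(k,m)`, stays inside the grid, and each step is `(1,0)`, `(0,1)` or `(1,1)`. -/
def IsWarpingPath (k m : ℕ) (φ : List (ℕ × ℕ)) : Prop :=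
  φ.head? = some (1, 1) ∧ φ.getLast? = some (k, m) ∧
  (∀ t ∈ φ, 1 ≤ t.1 ∧ t.1 ≤ k ∧ 1 ≤ t.2 ∧ t.2 ≤ m) ∧
  ∀ (l : ℕ) (h : l + 1 < φ.length),
    ((φ[l + 1]'h).1 = (φ[l]'(Nat.lt_of_succ_lt h)).1 + 1 ∧
       (φ[l + 1]'h).2 = (φ[l]'(Nat.lt_of_succ_lt h)).2) ∨
    ((φ[l + 1]'h).1 = (φ[l]'(Nat.lt_of_succ_lt h)).1 ∧
       (φ[l + 1]'h).2 = (φ[l]'(Nat.lt_of_succ_lt h)).2 + 1) ∨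
    ((φ[l + 1]'h).1 = (φ[l]'(Nat.lt_of_succ_lt h)).1 + 1 ∧
       (φ[l + 1]'h).2 = (φ[l]'(Nat.lt_of_succ_lt h)).2 + 1)

/-- `P(k,m)`: the set of all warping paths in the grid `[k] × [m]`. -/
def WarpingPaths (k m : ℕ) : Set (List (ℕ × ℕ)) := {φ | IsWarpingPath k m φ}

/-- Value of a time series at a (0-based) natural index, `0` out of bounds. -/
def nth {k : ℕ} (x : Fin k → ℝ) (i : ℕ) : ℝ := if h : i < k then x ⟨i, h⟩ else 0

/-- Entry of a matrix at (0-based) natural indices, `0` out of bounds. -/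
def entry {n m : ℕ} (W : Fin n → Fin m → ℝ) (i j : ℕ) : ℝ :=
  if h : i < n ∧ j < m then W ⟨i, h.1⟩ ⟨j, h.2⟩ else 0

/-- Elastic embedding `x ⊗_φ Z` of a time series `x ∈ ℝ^k` (`k ≤ n`) into the
matrix `Z ∈ ℝ^{n×m}` along the warping path `φ` (points of `φ` are 1-based). -/
def embed {n m k : ℕ} (x : Fin k → ℝ) (φ : List (ℕ × ℕ)) (Z : Fin n → Fin m → ℝ) :
    Fin n → Fin m → ℝ :=
  fun i j => if ((i : ℕ) + 1, (j : ℕ) + 1) ∈ φ then nth x i else Z i j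

/-- Frobenius inner product on `ℝ^{n×m}`. -/
def frobInner {n m : ℕ} (X Y : Fin n → Fin m → ℝ) : ℝ := ∑ i, ∑ j, X i j * Y i j

/-- Frobenius norm on `ℝ^{n×m}`. -/
noncomputable def frobNorm {n m : ℕ} (X : Fin n → Fin m → ℝ) : ℝ :=
  Real.sqrt (frobInner X X)

/-- Elastic inner product `σ_W(x) = max_{φ ∈ P(k,m)} ⟨x ⊗_φ 0, W⟩`. -/
noncomputable def elasticIP {n m k : ℕ} (W : Fin n → Fin m → ℝ) (x : Fin k → ℝ) : ℝ :=
  sSup ((fun φ => frobInner (embed x φ (0 : Fin n → Fin m → ℝ)) W) '' WarpingPaths k m)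

/-- Elastic Euclidean distance `δ_Y(x) = min_{φ ∈ P(k,m)} ‖x ⊗_φ Y − Y‖`. -/
noncomputable def elasticDist {n m k : ℕ} (Y : Fin n → Fin m → ℝ) (x : Fin k → ℝ) : ℝ :=
  sInf ((fun φ => frobNorm (embed x φ Y - Y)) '' WarpingPaths k m)

/-- DTW distance `d(x,z) = min_{φ ∈ P(k,m)} sqrt(Σ_{(i,j) ∈ φ} (x_i − z_j)²)`. -/
noncomputable def dtw {k m : ℕ} (x : Fin k → ℝ) (z : Fin m → ℝ) : ℝ :=
  sInf ((fun φ : List (ℕ × ℕ) =>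
      Real.sqrt (∑ t ∈ φ.toFinset, (nth x (t.1 - 1) - nth z (t.2 - 1)) ^ 2)) ''
    WarpingPaths k m)

/-- A canonical warping path: go down the first column, then right along the last row. -/
def canonPath (k m : ℕ) : List (ℕ × ℕ) :=
  (List.range (k + m - 1)).map (fun l => if l < k then (l + 1, 1) else (k, l + 2 - k))

lemma canonPath_isWarping (k m : ℕ) (hk : 1 ≤ k) (hm : 1 ≤ m) :
    IsWarpingPath k m (canonPath k m) := by
  have hlen : (canonPath k m).length = k + m - 1 := by
    simp [canonPath]
  have hget : ∀ (l : ℕ) (h : l < (canonPath k m).length),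
      (canonPath k m)[l] = if l < k then (l + 1, 1) else (k, l + 2 - k) := by
    intro l h
    simp [canonPath]
  refine ⟨?_, ?_, ?_, ?_⟩
  · have h0 : 0 < (canonPath k m).length := by omega
    rw [List.head?_eq_getElem?, List.getElem?_eq_getElem h0, hget 0 h0]
    simp only [Option.some.injEq]
    split
    · rfl
    · omega
  · have h0 : 0 < (canonPath k m).length := by omega
    rw [List.getLast?_eq_getElem?, List.getElem?_eq_getElem (by omega :
      (canonPath k m).length - 1 < (canonPath k m).length),
      hget _ (by omega)]
    rw [hlen]
    simp only [Option.some.injEq]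
    split
    · rename_i hc
      have : m = 1 := by omega
      refine Prod.ext ?_ ?_ <;> simp [this] <;> omega
    · rename_i hc
      refine Prod.ext ?_ ?_ <;> simp <;> omega
  · intro t ht
    simp only [canonPath, List.mem_map, List.mem_range] at ht
    obtain ⟨l, hl, rfl⟩ := ht
    by_cases hc : l < k <;> simp [hc] <;> omega
  · intro l h
    have h' : l < (canonPath k m).length := Nat.lt_of_succ_lt h
    rw [hget _ h, hget _ h']
    rw [hlen] at h
    by_cases h1 : l + 1 < k
    · left; simp [h1, Nat.lt_of_succ_lt h1]
    · by_cases h2 : l < k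
      · right; left
        have : ¬ (l + 1 < k) := h1
        simp [h2, this]
        omega
      · right; left
        simp [h2, h1]
        omega

lemma warpingPaths_nonempty (k m : ℕ) (hk : 1 ≤ k) (hm : 1 ≤ m) :
    (WarpingPaths k m).Nonempty :=
  ⟨canonPath k m, canonPath_isWarping k m hk hm⟩

lemma embed_abs_le {n m k : ℕ} (x : Fin k → ℝ) (φ : List (ℕ × ℕ)) (i : Fin n) (j : Fin m) :
    |embed x φ (0 : Fin n → Fin m → ℝ) i j| ≤ |nth x i| := by
  unfold embed
  split <;> simp

lemma frob_bdd {n m k : ℕ} (x : Fin k → ℝ) (W : Fin n → Fin m → ℝ) :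
    BddAbove ((fun φ => frobInner (embed x φ (0 : Fin n → Fin m → ℝ)) W) ''
      WarpingPaths k m) := by
  refine ⟨∑ i, ∑ j, |nth x (i : Fin n)| * |W i j|, ?_⟩
  rintro y ⟨φ, _, rfl⟩
  unfold frobInner
  refine Finset.sum_le_sum fun i _ => Finset.sum_le_sum fun j _ => ?_
  calc embed x φ 0 i j * W i j ≤ |embed x φ 0 i j * W i j| := le_abs_self _
    _ = |embed x φ 0 i j| * |W i j| := abs_mul _ _
    _ ≤ |nth x i| * |W i j| :=
      mul_le_mul_of_nonneg_right (embed_abs_le x φ i j) (abs_nonneg _)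

lemma frob_lin {n m : ℕ} (X W1 W2 : Fin n → Fin m → ℝ) (a b : ℝ) :
    frobInner X (a • W1 + b • W2) = a * frobInner X W1 + b * frobInner X W2 := by
  unfold frobInner
  simp only [Pi.add_apply, Pi.smul_apply, smul_eq_mul, Finset.mul_sum]
  rw [← Finset.sum_add_distrib]
  refine Finset.sum_congr rfl fun i _ => ?_
  rw [← Finset.sum_add_distrib]
  refine Finset.sum_congr rfl fun j _ => ?_
  ring

/-- For every time series `x ∈ ℝ^k` with `1 ≤ k ≤ n` and every elasticity
`m ≥ 1`, the elastic inner product `W ↦ σ_W(x)` is convex on `ℝ^{n×m}`, and consequently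
the elastic linear function `(W, b) ↦ b + σ_W(x)` is convex on `ℝ^{n×m} × ℝ`. -/
theorem elasticIP_convex (n m k : ℕ) (hk1 : 1 ≤ k) (hkn : k ≤ n) (hm : 1 ≤ m)
    (x : Fin k → ℝ) :
    ConvexOn ℝ Set.univ (fun W : Fin n → Fin m → ℝ => elasticIP W x) ∧
    ConvexOn ℝ Set.univ
      (fun p : (Fin n → Fin m → ℝ) × ℝ => p.2 + elasticIP p.1 x) := by
  have hne : (WarpingPaths k m).Nonempty := warpingPaths_nonempty k m hk1 hm
  have h1 : ConvexOn ℝ Set.univ (fun W : Fin n → Fin m → ℝ => elasticIP W x) := by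
    refine ⟨convex_univ, fun W1 _ W2 _ a b ha hb hab => ?_⟩
    simp only [smul_eq_mul]
    unfold elasticIP
    refine csSup_le (hne.image _) ?_
    rintro y ⟨φ, hφ, rfl⟩
    dsimp only
    rw [frob_lin]
    have le1 : frobInner (embed x φ 0) W1 ≤
        sSup ((fun φ => frobInner (embed x φ (0 : Fin n → Fin m → ℝ)) W1) ''
          WarpingPaths k m) :=
      le_csSup (frob_bdd x W1) ⟨φ, hφ, rfl⟩
    have le2 : frobInner (embed x φ 0) W2 ≤
        sSup ((fun φ => frobInner (embed x φ (0 : Fin n → Fin m → ℝ)) W2) ''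
          WarpingPaths k m) :=
      le_csSup (frob_bdd x W2) ⟨φ, hφ, rfl⟩
    exact add_le_add (mul_le_mul_of_nonneg_left le1 ha)
      (mul_le_mul_of_nonneg_left le2 hb)
  refine ⟨h1, ?_⟩
  have h2 : ConvexOn ℝ Set.univ (fun p : (Fin n → Fin m → ℝ) × ℝ => p.2) :=
    ⟨convex_univ, fun p _ q _ a b _ _ _ => by
      simp [Prod.smul_snd, smul_eq_mul]⟩
  have h3 : ConvexOn ℝ Set.univ (fun p : (Fin n → Fin m → ℝ) × ℝ => elasticIP p.1 x) :=
    ⟨convex_univ, fun p _ q _ a b ha hb hab => by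
      have := h1.2 (Set.mem_univ p.1) (Set.mem_univ q.1) ha hb hab
      simpa using this⟩
  exact h2.add h3
end

section
/- Let z ∈ ℝ^m and let Z ∈ ℝ^{n×m} be the matrix all of whose n rows equal z. Then for every time series x ∈ ℝ^k with 1 ≤ k ≤ n, the elastic Euclidean distance equals the DTW distance: δ_Z(x) = d(x, z). In particular, the elastic Euclidean distance with a constant-row parameter matrix generalizes the dynamic time warping distance. -/
/-- If `Z ∈ ℝ^{n×m}` has all `n` rows equal to `z ∈ ℝ^m`, then for every
time series `x ∈ ℝ^k` with `1 ≤ k ≤ n` the elastic Euclidean distance equals the DTW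
distance: `δ_Z(x) = d(x, z)`. -/
theorem elasticDist_constRows_eq_dtw (n m k : ℕ) (hk1 : 1 ≤ k) (hkn : k ≤ n) (hm : 1 ≤ m)
    (z : Fin m → ℝ) (x : Fin k → ℝ) :
    elasticDist (fun _ : Fin n => z) x = dtw x z := by
  unfold elasticDist dtw
  congr 1
  apply Set.image_congr
  intro φ hφ
  obtain ⟨h1, h2, hb, h4⟩ := hφ
  unfold frobNorm frobInner
  congr 1
  have hsum : ∀ (i : Fin n) (j : Fin m),
      (embed x φ (fun _ : Fin n => z) - fun _ : Fin n => z) i j *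
        (embed x φ (fun _ : Fin n => z) - fun _ : Fin n => z) i j
      = if ((i:ℕ)+1,(j:ℕ)+1) ∈ φ then
          (nth x ((i:ℕ)+1-1) - nth z ((j:ℕ)+1-1))^2 else 0 := by
    intro i j
    simp only [Pi.sub_apply, embed]
    by_cases h : ((i:ℕ)+1,(j:ℕ)+1) ∈ φ
    · rw [if_pos h, if_pos h, Nat.add_sub_cancel, Nat.add_sub_cancel]
      have hz : nth z (j:ℕ) = z j := by simp [nth, j.isLt]
      rw [hz]; ring
    · rw [if_neg h, if_neg h]; ring
  simp only [hsum]
  rw [← Finset.sum_product']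
  rw [← Finset.sum_filter]
  refine Finset.sum_bij'
    (fun (p : Fin n × Fin m) (_ : p ∈ (Finset.univ ×ˢ Finset.univ).filter
        (fun q : Fin n × Fin m => ((q.1:ℕ)+1, (q.2:ℕ)+1) ∈ φ)) => ((p.1:ℕ)+1, (p.2:ℕ)+1))
    (fun (t : ℕ × ℕ) (ht : t ∈ φ.toFinset) =>
      ((⟨t.1 - 1, by have := hb t (List.mem_toFinset.mp ht); omega⟩ : Fin n),
       (⟨t.2 - 1, by have := hb t (List.mem_toFinset.mp ht); omega⟩ : Fin m)))
    ?_ ?_ ?_ ?_ ?_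
  · intro p hp
    simp only [Finset.mem_filter] at hp
    exact List.mem_toFinset.mpr hp.2
  · intro t ht
    have hbt := hb t (List.mem_toFinset.mp ht)
    simp only [Finset.mem_filter, Finset.mem_product, Finset.mem_univ, true_and]
    have e1 : t.1 - 1 + 1 = t.1 := by omega
    have e2 : t.2 - 1 + 1 = t.2 := by omega
    rw [e1, e2]
    exact List.mem_toFinset.mp ht
  · intro p hp
    ext <;> simp
  · intro t ht
    have hbt := hb t (List.mem_toFinset.mp ht)
    ext <;> simp <;> omega
  · intro p hp
    simp
end

section
/- Correctness of the dynamic program for the elastic inner product (Algorithm 1): Let x ∈ ℝ^k and W ∈ ℝ^{n×m} with 1 ≤ k ≤ n and m ≥ 1, and define the score matrix S = (s_{ij}) ∈ ℝ^{k×m} by s_{11} = x_1·w_{11}; s_{i1} = s_{i−1,1} + x_i·w_{i1} for 2 ≤ i ≤ k; s_{1j} = s_{1,j−1} + x_1·w_{1j} for 2 ≤ j ≤ m; and s_{ij} = x_i·w_{ij} + max{s_{i−1,j}, s_{i,j−1}, s_{i−1,j−1}} for 2 ≤ i ≤ k and 2 ≤ j ≤ m. Then s_{km} = σ_W(x) =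 max_{φ ∈ P(k,m)} Σ_{(i,j)∈φ} x_i·w_{ij}. -/
section AuxWP
set_option linter.unreachableTactic false
set_option linter.unnecessarySeqFocus false
set_option linter.unusedTactic false
set_option linter.unusedVariables false

inductive WP : ℕ → ℕ → List (ℕ × ℕ) → Prop
  | single : WP 1 1 [(1,1)]
  | up {a b φ} : WP a b φ → WP (a+1) b (φ ++ [(a+1, b)])
  | right {a b φ} : WP a b φ → WP a (b+1) (φ ++ [(a, b+1)])
  | diag {a b φ} : WP a b φ → WP (a+1) (b+1) (φ ++ [(a+1, b+1)])

lemma WP.pos {a b φ} (h : WP a b φ) : 1 ≤ a ∧ 1 ≤ b := by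
  induction h with
  | single => exact ⟨le_refl _, le_refl _⟩
  | up _ ih => omega
  | right _ ih => omega
  | diag _ ih => omega

lemma WP.bounds {a b φ} (h : WP a b φ) :
    ∀ t ∈ φ, 1 ≤ t.1 ∧ t.1 ≤ a ∧ 1 ≤ t.2 ∧ t.2 ≤ b := by
  induction h with
  | single => intro t ht; simp_all
  | up h ih =>
    intro t ht
    rcases List.mem_append.1 ht with ht | ht
    · have := ih t ht; omega
    · simp at ht; subst ht; have := h.pos; refine ⟨?_, ?_, ?_, ?_⟩ <;> simp <;> omega
  | right h ih =>
    intro t ht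
    rcases List.mem_append.1 ht with ht | ht
    · have := ih t ht; omega
    · simp at ht; subst ht; have := h.pos; refine ⟨?_, ?_, ?_, ?_⟩ <;> simp <;> omega
  | diag h ih =>
    intro t ht
    rcases List.mem_append.1 ht with ht | ht
    · have := ih t ht; omega
    · simp at ht; subst ht; have := h.pos; refine ⟨?_, ?_, ?_, ?_⟩ <;> simp <;> omega

lemma sum_concat (f : ℕ × ℕ → ℝ) (φ : List (ℕ × ℕ)) (p : ℕ × ℕ) (hp : p ∉ φ) :
    ∑ t ∈ (φ ++ [p]).toFinset, f t = (∑ t ∈ φ.toFinset, f t) + f p := by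
  rw [List.toFinset_append]
  have : φ.toFinset ∪ [p].toFinset = insert p φ.toFinset := by
    ext r; simp [or_comm]
  rw [this, Finset.sum_insert (by simpa using hp), add_comm]

lemma concat_warping {a b c d : ℕ} {φ : List (ℕ × ℕ)} (h : IsWarpingPath a b φ)
    (hstep : (c = a + 1 ∧ d = b) ∨ (c = a ∧ d = b + 1) ∨ (c = a + 1 ∧ d = b + 1)) :
    IsWarpingPath c d (φ ++ [(c, d)]) := by
  obtain ⟨h1, h2, h3, h4⟩ := h
  have hne : φ ≠ [] := by intro he; rw [he] at h1; simp at h1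
  have hab : 1 ≤ a ∧ 1 ≤ b := by
    have hmem : (a, b) ∈ φ := by
      have := List.getLast?_eq_getLast hne
      rw [this] at h2
      have : φ.getLast hne = (a, b) := by injection h2
      rw [← this]; exact List.getLast_mem hne
    have := h3 _ hmem; simpa using this
  refine ⟨?_, ?_, ?_, ?_⟩
  · rw [List.head?_append, h1]; rfl
  · exact List.getLast?_concat
  · intro t ht
    rcases List.mem_append.1 ht with ht | ht
    · have := h3 t ht; omega
    · simp at ht; subst ht; simp; omega
  · intro l hl
    simp only [List.length_append, List.length_cons, List.length_nil] at hl
    by_cases hl2 : l + 1 < φ.length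
    · have hl3 : l < φ.length := Nat.lt_of_succ_lt hl2
      rw [List.getElem_append_left hl2, List.getElem_append_left hl3]
      exact h4 l hl2
    · have hl1 : l + 1 = φ.length := by omega
      have hl3 : l < φ.length := by omega
      have e1 : (φ ++ [(c, d)])[l + 1]'(by simp; omega) = (c, d) := by
        rw [List.getElem_append_right (by omega)]
        simp [hl1]
      have e2 : (φ ++ [(c, d)])[l]'(by simp; omega) = φ[l]'hl3 :=
        List.getElem_append_left hl3
      have h5 : φ[l]? = some (a, b) := by
        rw [show l = φ.length - 1 by omega, ← List.getLast?_eq_getElem?, h2]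
      obtain ⟨hw, e3⟩ := List.getElem?_eq_some_iff.1 h5
      rw [e1, e2, e3]
      rcases hstep with ⟨hc, hd⟩ | ⟨hc, hd⟩ | ⟨hc, hd⟩
      · exact Or.inl ⟨hc, hd⟩
      · exact Or.inr (Or.inl ⟨hc, hd⟩)
      · exact Or.inr (Or.inr ⟨hc, hd⟩)

lemma WP.isWarpingPath {a b φ} (h : WP a b φ) : IsWarpingPath a b φ := by
  induction h with
  | single =>
    refine ⟨rfl, rfl, ?_, ?_⟩
    · intro t ht; simp at ht; subst ht; simp
    · intro l hl; simp at hl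
  | up h ih => exact concat_warping ih (Or.inl ⟨rfl, rfl⟩)
  | right h ih => exact concat_warping ih (Or.inr (Or.inl ⟨rfl, rfl⟩))
  | diag h ih => exact concat_warping ih (Or.inr (Or.inr ⟨rfl, rfl⟩))

lemma wp_mono {φ : List (ℕ × ℕ)}
    (h4 : ∀ (l : ℕ) (h : l + 1 < φ.length),
      ((φ[l + 1]'h).1 = (φ[l]'(Nat.lt_of_succ_lt h)).1 + 1 ∧
         (φ[l + 1]'h).2 = (φ[l]'(Nat.lt_of_succ_lt h)).2) ∨
      ((φ[l + 1]'h).1 = (φ[l]'(Nat.lt_of_succ_lt h)).1 ∧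
         (φ[l + 1]'h).2 = (φ[l]'(Nat.lt_of_succ_lt h)).2 + 1) ∨
      ((φ[l + 1]'h).1 = (φ[l]'(Nat.lt_of_succ_lt h)).1 + 1 ∧
         (φ[l + 1]'h).2 = (φ[l]'(Nat.lt_of_succ_lt h)).2 + 1)) :
    ∀ (l' l : ℕ) (hl : l ≤ l') (h : l' < φ.length),
      (φ[l]'(lt_of_le_of_lt hl h)).1 ≤ (φ[l']'h).1 ∧
      (φ[l]'(lt_of_le_of_lt hl h)).2 ≤ (φ[l']'h).2 := by
  intro l'
  induction l' with
  | zero => intro l hl h; interval_cases l; exact ⟨le_rfl, le_rfl⟩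
  | succ l' ih =>
    intro l hl h
    by_cases hc : l = l' + 1
    · subst hc; exact ⟨le_rfl, le_rfl⟩
    · have hll : l ≤ l' := by omega
      have h' : l' < φ.length := Nat.lt_of_succ_lt h
      have h1 := ih l hll h'
      have h2 := h4 l' h
      omega

lemma toWP : ∀ (N : ℕ) (φ : List (ℕ × ℕ)), φ.length ≤ N →
    ∀ a b, IsWarpingPath a b φ → WP a b φ := by
  intro N
  induction N with
  | zero =>
    intro φ hlen a b h
    obtain ⟨h1, _, _, _⟩ := h
    rw [List.length_eq_zero_iff.1 (Nat.le_zero.1 hlen)] at h1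
    simp at h1
  | succ N ih =>
    intro φ hlen a b h
    obtain ⟨h1, h2, h3, h4⟩ := h
    have hne : φ ≠ [] := by intro he; rw [he] at h1; simp at h1
    have hpos : 0 < φ.length := List.length_pos_iff.2 hne
    by_cases hlen1 : φ.length = 1
    · obtain ⟨t, ht⟩ := List.length_eq_one_iff.1 hlen1
      subst ht
      have ht1 : t = (1, 1) := by simpa using h1
      have ht2 : t = (a, b) := by simpa using h2
      rw [ht1] at ht2
      rw [Prod.ext_iff] at ht2
      simp at ht2
      obtain ⟨rfl, rfl⟩ := ht2
      rw [ht1]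
      exact WP.single
    · -- φ.length ≥ 2
      have hL : 2 ≤ φ.length := by omega
      set L := φ.length with hLdef
      set ψ := φ.dropLast with hψdef
      have hψlen : ψ.length = L - 1 := by simp [hψdef, hLdef]
      have hψne : ψ ≠ [] := by
        intro he; rw [he] at hψlen; simp at hψlen; omega
      have hlast : φ.getLast hne = (a, b) := by
        have := List.getLast?_eq_getLast hne
        rw [this] at h2; injection h2
      have hdecomp : ψ ++ [(a, b)] = φ := by
        rw [hψdef, ← hlast]; exact List.dropLast_append_getLast hne
      -- the last element of ψ
      have hq : L - 2 < ψ.length := by omega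
      have hq' : L - 2 < φ.length := by omega
      set q := φ[L - 2]'hq' with hqdef
      have hψq : ψ[L - 2]'hq = q := List.getElem_dropLast hq
      -- last of φ as getElem
      have hL1 : L - 1 < φ.length := by omega
      have hφlast : φ[L - 1]'hL1 = (a, b) := by
        have h5 : φ[L - 1]? = some (a, b) := by
          rw [← List.getLast?_eq_getElem?, h2]
        obtain ⟨hw, e3⟩ := List.getElem?_eq_some_iff.1 h5
        exact e3
      -- step between q and (a,b)
      have hstep := h4 (L - 2) (by omega)
      have eidx : L - 2 + 1 = L - 1 := by omega
      -- ψ is a warping path to q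
      have hψ : IsWarpingPath q.1 q.2 ψ := by
        refine ⟨?_, ?_, ?_, ?_⟩
        · rw [← hdecomp, List.head?_append] at h1
          cases hh : ψ.head? with
          | none => exact absurd (List.head?_eq_none_iff.1 hh) hψne
          | some t => rw [hh] at h1; simpa using h1
        · rw [List.getLast?_eq_getElem?]
          rw [show ψ.length - 1 = L - 2 by omega]
          rw [List.getElem?_eq_getElem hq, hψq]
        · intro t ht
          have htφ : t ∈ φ := List.dropLast_subset φ ht
          have hb := h3 t htφ
          obtain ⟨l, hlψ, hlt⟩ := List.mem_iff_getElem.1 ht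
          have hlφ : l < φ.length := by omega
          have hlel : l ≤ L - 2 := by omega
          have hm := wp_mono h4 (L - 2) l hlel hq'
          have heq : ψ[l]'hlψ = φ[l]'hlφ := List.getElem_dropLast hlψ
          have e7 : φ[l]? = some t := by
            rw [List.getElem?_eq_getElem hlφ, ← heq, hlt]
          have e8 : φ[l]'(lt_of_le_of_lt hlel hq') = t := by
            have h9 := (List.getElem?_eq_getElem (lt_of_le_of_lt hlel hq')).symm.trans e7
            injection h9
          rw [e8, ← hqdef] at hm
          exact ⟨hb.1, hm.1, hb.2.2.1, hm.2⟩
        · intro l hl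
          have hl1 : l + 1 < φ.length := by omega
          have e1 : ψ[l + 1]'hl = φ[l + 1]'hl1 := List.getElem_dropLast hl
          have e2 : ψ[l]'(Nat.lt_of_succ_lt hl) = φ[l]'(Nat.lt_of_succ_lt hl1) :=
            List.getElem_dropLast (Nat.lt_of_succ_lt hl)
          rw [e1, e2]
          exact h4 l hl1
      have hwpψ : WP q.1 q.2 ψ := ih ψ (by omega) q.1 q.2 hψ
      -- conclude by the step
      have h6 : φ[L - 2 + 1]? = some (a, b) := by
        rw [eidx, List.getElem?_eq_getElem hL1, hφlast]
      obtain ⟨hw6, e6⟩ := List.getElem?_eq_some_iff.1 h6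
      rw [e6, ← hqdef] at hstep
      rw [← hdecomp]
      rcases hstep with ⟨hc, hd⟩ | ⟨hc, hd⟩ | ⟨hc, hd⟩ <;> simp only at hc hd
      · rw [show (a, b) = (q.1 + 1, q.2) by rw [hc, hd]]
        rw [show a = q.1 + 1 from hc, show b = q.2 from hd]
        exact hwpψ.up
      · rw [show (a, b) = (q.1, q.2 + 1) by rw [hc, hd]]
        rw [show a = q.1 from hc, show b = q.2 + 1 from hd]
        exact hwpψ.right
      · rw [show (a, b) = (q.1 + 1, q.2 + 1) by rw [hc, hd]]
        rw [show a = q.1 + 1 from hc, show b = q.2 + 1 from hd]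
        exact hwpψ.diag

lemma WP.notmem_up {a b φ} (h : WP a b φ) : (a + 1, b) ∉ φ := by
  intro hm; have := h.bounds _ hm; simp at this

lemma WP.notmem_right {a b φ} (h : WP a b φ) : (a, b + 1) ∉ φ := by
  intro hm; have := h.bounds _ hm; simp at this

lemma WP.notmem_diag {a b φ} (h : WP a b φ) : (a + 1, b + 1) ∉ φ := by
  intro hm; have := h.bounds _ hm; simp at this

section DP

variable {n m k : ℕ} (x : Fin k → ℝ) (W : Fin n → Fin m → ℝ)

noncomputable def pf (t : ℕ × ℕ) : ℝ := nth x (t.1 - 1) * entry W (t.1 - 1) (t.2 - 1)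

lemma dp_le (hk1 : 1 ≤ k) (hkn : k ≤ n) (hm : 1 ≤ m) (S : ℕ → ℕ → ℝ)
    (h00 : S 0 0 = nth x 0 * entry W 0 0)
    (hi0 : ∀ i : ℕ, i + 1 < k → S (i + 1) 0 = S i 0 + nth x (i + 1) * entry W (i + 1) 0)
    (h0j : ∀ j : ℕ, j + 1 < m → S 0 (j + 1) = S 0 j + nth x 0 * entry W 0 (j + 1))
    (hij : ∀ i j : ℕ, i + 1 < k → j + 1 < m →
      S (i + 1) (j + 1) = nth x (i + 1) * entry W (i + 1) (j + 1) +
        max (max (S i (j + 1)) (S (i + 1) j)) (S i j)) :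
    ∀ {a b : ℕ} {φ : List (ℕ × ℕ)}, WP a b φ → a ≤ k → b ≤ m →
      (∑ t ∈ φ.toFinset, pf x W t) ≤ S (a - 1) (b - 1) := by
  intro a b φ h
  induction h with
  | single =>
    intro _ _
    simp [pf, h00]
  | @up a b φ h ih =>
    intro ha hb
    have hpos := h.pos
    rw [sum_concat _ _ _ h.notmem_up]
    have hf : pf x W (a + 1, b) = nth x a * entry W a (b - 1) := by simp [pf]
    rw [hf]
    have hih := ih (by omega) hb
    by_cases hb1 : b = 1
    · subst hb1
      have hrec := hi0 (a - 1) (by omega)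
      rw [show a - 1 + 1 = a by omega] at hrec
      simp only [show (1 : ℕ) - 1 = 0 from rfl] at hih ⊢
      rw [show a + 1 - 1 = a by omega, hrec]
      linarith
    · have hrec := hij (a - 1) (b - 2) (by omega) (by omega)
      rw [show a - 1 + 1 = a by omega, show b - 2 + 1 = b - 1 by omega] at hrec
      rw [show a + 1 - 1 = a by omega, hrec]
      have : S (a - 1) (b - 1) ≤
          max (max (S (a - 1) (b - 1)) (S a (b - 2))) (S (a - 1) (b - 2)) :=
        le_max_of_le_left (le_max_left _ _)
      linarith
  | @right a b φ h ih =>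
    intro ha hb
    have hpos := h.pos
    rw [sum_concat _ _ _ h.notmem_right]
    have hf : pf x W (a, b + 1) = nth x (a - 1) * entry W (a - 1) b := by simp [pf]
    rw [hf]
    have hih := ih ha (by omega)
    by_cases ha1 : a = 1
    · subst ha1
      have hrec := h0j (b - 1) (by omega)
      rw [show b - 1 + 1 = b by omega] at hrec
      simp only [show (1 : ℕ) - 1 = 0 from rfl] at hih ⊢
      rw [show b + 1 - 1 = b by omega, hrec]
      linarith
    · have hrec := hij (a - 2) (b - 1) (by omega) (by omega)
      rw [show a - 2 + 1 = a - 1 by omega, show b - 1 + 1 = b by omega] at hrec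
      rw [show b + 1 - 1 = b by omega, hrec]
      have : S (a - 1) (b - 1) ≤
          max (max (S (a - 2) b) (S (a - 1) (b - 1))) (S (a - 2) (b - 1)) :=
        le_max_of_le_left (le_max_right _ _)
      linarith
  | @diag a b φ h ih =>
    intro ha hb
    have hpos := h.pos
    rw [sum_concat _ _ _ h.notmem_diag]
    have hf : pf x W (a + 1, b + 1) = nth x a * entry W a b := by simp [pf]
    rw [hf]
    have hih := ih (by omega) (by omega)
    have hrec := hij (a - 1) (b - 1) (by omega) (by omega)
    rw [show a - 1 + 1 = a by omega, show b - 1 + 1 = b by omega] at hrec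
    rw [show a + 1 - 1 = a by omega, show b + 1 - 1 = b by omega, hrec]
    have : S (a - 1) (b - 1) ≤
        max (max (S (a - 1) b) (S a (b - 1))) (S (a - 1) (b - 1)) :=
      le_max_right _ _
    linarith


lemma dp_exists (hk1 : 1 ≤ k) (hkn : k ≤ n) (hm : 1 ≤ m) (S : ℕ → ℕ → ℝ)
    (h00 : S 0 0 = nth x 0 * entry W 0 0)
    (hi0 : ∀ i : ℕ, i + 1 < k → S (i + 1) 0 = S i 0 + nth x (i + 1) * entry W (i + 1) 0)
    (h0j : ∀ j : ℕ, j + 1 < m → S 0 (j + 1) = S 0 j + nth x 0 * entry W 0 (j + 1))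
    (hij : ∀ i j : ℕ, i + 1 < k → j + 1 < m →
      S (i + 1) (j + 1) = nth x (i + 1) * entry W (i + 1) (j + 1) +
        max (max (S i (j + 1)) (S (i + 1) j)) (S i j)) :
    ∀ (s i j : ℕ), i + j = s → i < k → j < m →
      ∃ φ, WP (i + 1) (j + 1) φ ∧ (∑ t ∈ φ.toFinset, pf x W t) = S i j := by
  intro s
  induction s using Nat.strong_induction_on with
  | _ s ihs =>
    intro i j hs hi hj
    match i, j with
    | 0, 0 =>
      refine ⟨[(1, 1)], WP.single, ?_⟩
      simp [pf, h00]
    | (i' + 1), 0 =>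
      obtain ⟨φ, hφ, hsum⟩ := ihs (i' + 0) (by omega) i' 0 rfl (by omega) hj
      refine ⟨φ ++ [(i' + 2, 1)], ?_, ?_⟩
      · exact hφ.up
      · rw [sum_concat _ _ _ (by exact hφ.notmem_up), hsum]
        have hf : pf x W (i' + 2, 1) = nth x (i' + 1) * entry W (i' + 1) 0 := by
          simp [pf]
        rw [hf, ← hi0 i' hi]
    | 0, (j' + 1) =>
      obtain ⟨φ, hφ, hsum⟩ := ihs (0 + j') (by omega) 0 j' rfl hi (by omega)
      refine ⟨φ ++ [(1, j' + 2)], ?_, ?_⟩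
      · exact hφ.right
      · rw [sum_concat _ _ _ (by exact hφ.notmem_right), hsum]
        have hf : pf x W (1, j' + 2) = nth x 0 * entry W 0 (j' + 1) := by
          simp [pf]
        rw [hf, ← h0j j' hj]
    | (i' + 1), (j' + 1) =>
      have hrec := hij i' j' hi hj
      rcases max_choice (max (S i' (j' + 1)) (S (i' + 1) j')) (S i' j') with hmx | hmx
      · rcases max_choice (S i' (j' + 1)) (S (i' + 1) j') with hmx2 | hmx2
        · -- up step from (i', j'+1)
          obtain ⟨φ, hφ, hsum⟩ := ihs (i' + (j' + 1)) (by omega) i' (j' + 1) rfl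
            (by omega) hj
          refine ⟨φ ++ [(i' + 2, j' + 2)], ?_, ?_⟩
          · exact hφ.up
          · rw [sum_concat _ _ _ (by exact hφ.notmem_up), hsum]
            have hf : pf x W (i' + 2, j' + 2) =
                nth x (i' + 1) * entry W (i' + 1) (j' + 1) := by simp [pf]
            rw [hf, hrec, hmx, hmx2, add_comm]
        · -- right step from (i'+1, j')
          obtain ⟨φ, hφ, hsum⟩ := ihs ((i' + 1) + j') (by omega) (i' + 1) j' rfl hi
            (by omega)
          refine ⟨φ ++ [(i' + 2, j' + 2)], ?_, ?_⟩
          · exact hφ.right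
          · rw [sum_concat _ _ _ (by exact hφ.notmem_right), hsum]
            have hf : pf x W (i' + 2, j' + 2) =
                nth x (i' + 1) * entry W (i' + 1) (j' + 1) := by simp [pf]
            rw [hf, hrec, hmx, hmx2, add_comm]
      · -- diag step from (i', j')
        obtain ⟨φ, hφ, hsum⟩ := ihs (i' + j') (by omega) i' j' rfl (by omega) (by omega)
        refine ⟨φ ++ [(i' + 2, j' + 2)], ?_, ?_⟩
        · exact hφ.diag
        · rw [sum_concat _ _ _ (by exact hφ.notmem_diag), hsum]
          have hf : pf x W (i' + 2, j' + 2) =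
              nth x (i' + 1) * entry W (i' + 1) (j' + 1) := by simp [pf]
          rw [hf, hrec, hmx, add_comm]

end DP


end AuxWP

/-- Correctness of the dynamic program for the elastic inner product
(Algorithm 1). The score matrix `S` is indexed 0-based, so `S i j` is the paper's
`s_{i+1,j+1}` and the returned value is `S (k-1) (m-1) = s_{km}`. -/
theorem dp_elasticIP_correct (n m k : ℕ) (hk1 : 1 ≤ k) (hkn : k ≤ n) (hm : 1 ≤ m)
    (x : Fin k → ℝ) (W : Fin n → Fin m → ℝ) (S : ℕ → ℕ → ℝ)
    (h00 : S 0 0 = nth x 0 * entry W 0 0)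
    (hi0 : ∀ i : ℕ, i + 1 < k → S (i + 1) 0 = S i 0 + nth x (i + 1) * entry W (i + 1) 0)
    (h0j : ∀ j : ℕ, j + 1 < m → S 0 (j + 1) = S 0 j + nth x 0 * entry W 0 (j + 1))
    (hij : ∀ i j : ℕ, i + 1 < k → j + 1 < m →
      S (i + 1) (j + 1) = nth x (i + 1) * entry W (i + 1) (j + 1) +
        max (max (S i (j + 1)) (S (i + 1) j)) (S i j)) :
    S (k - 1) (m - 1) =
      sSup ((fun φ : List (ℕ × ℕ) =>
          ∑ t ∈ φ.toFinset, nth x (t.1 - 1) * entry W (t.1 - 1) (t.2 - 1)) ''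
        WarpingPaths k m) := by
  obtain ⟨φ0, hφ0, hsum0⟩ :=
    dp_exists x W hk1 hkn hm S h00 hi0 h0j hij ((k - 1) + (m - 1)) (k - 1) (m - 1) rfl
      (by omega) (by omega)
  rw [show k - 1 + 1 = k by omega, show m - 1 + 1 = m by omega] at hφ0
  have hmem : (fun φ : List (ℕ × ℕ) =>
      ∑ t ∈ φ.toFinset, nth x (t.1 - 1) * entry W (t.1 - 1) (t.2 - 1)) φ0 ∈
      ((fun φ : List (ℕ × ℕ) =>
          ∑ t ∈ φ.toFinset, nth x (t.1 - 1) * entry W (t.1 - 1) (t.2 - 1)) ''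
        WarpingPaths k m) :=
    Set.mem_image_of_mem _ hφ0.isWarpingPath
  have hub : ∀ r ∈ ((fun φ : List (ℕ × ℕ) =>
      ∑ t ∈ φ.toFinset, nth x (t.1 - 1) * entry W (t.1 - 1) (t.2 - 1)) ''
        WarpingPaths k m), r ≤ S (k - 1) (m - 1) := by
    rintro r ⟨φ, hφ, rfl⟩
    have hwp : WP k m φ := toWP φ.length φ le_rfl k m hφ
    exact dp_le x W hk1 hkn hm S h00 hi0 h0j hij hwp le_rfl le_rfl
  refine le_antisymm ?_ ?_
  · have : (fun φ : List (ℕ × ℕ) =>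
        ∑ t ∈ φ.toFinset, nth x (t.1 - 1) * entry W (t.1 - 1) (t.2 - 1)) φ0 =
        S (k - 1) (m - 1) := hsum0
    rw [← this]
    exact le_csSup ⟨S (k - 1) (m - 1), hub⟩ hmem
  · exact csSup_le ⟨_, hmem⟩ hub
end

section
/- Every piecewise smooth function f : ℝ^d → ℝ is differentiable at Lebesgue-almost every point: the set of points at which f fails to be differentiable has d-dimensional Lebesgue measure zero. -/
/-- A function `f : E → ℝ` is piecewise smooth if it is continuous and there is a finite
collection of continuously differentiable functions `f_i : E → ℝ` such that
`f x ∈ {f_i x : i ∈ I}` for every `x`. -/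
def PiecewiseSmooth {E : Type} [NormedAddCommGroup E] [NormedSpace ℝ E]
    (f : E → ℝ) : Prop :=
  Continuous f ∧
    ∃ (ι : Type) (_ : Fintype ι) (g : ι → E → ℝ),
      (∀ i, ContDiff ℝ 1 (g i)) ∧ ∀ x, ∃ i, f x = g i x

open MeasureTheory Set Metric Filter Topology

/-- A continuous function on `ℝ` that is a pointwise selection from finitely many
functions, each `L`-Lipschitz on `[a, b]`, satisfies `|h b - h a| ≤ L * (b - a)`. -/
lemma selection_key1d {ι : Type} [Fintype ι] {h : ℝ → ℝ} {G : ι → ℝ → ℝ} {L a b : ℝ}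
    (hab : a ≤ b) (hcont : Continuous h) (hGcont : ∀ i, Continuous (G i))
    (hlip : ∀ i, ∀ s ∈ Icc a b, ∀ t ∈ Icc a b, |G i s - G i t| ≤ L * |s - t|)
    (hsel : ∀ t ∈ Icc a b, ∃ i, h t = G i t) :
    |h b - h a| ≤ L * (b - a) := by
  set S : Set ℝ := {t | |h t - h a| ≤ L * (t - a)} with hS
  have hSclosed : IsClosed S := by
    apply isClosed_le
    · exact (hcont.sub continuous_const).abs
    · exact continuous_const.mul (continuous_id.sub continuous_const)
  have haS : a ∈ S := by simp [hS]
  have hsub : Icc a b ⊆ S := by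
    apply IsClosed.Icc_subset_of_forall_exists_gt (hSclosed.inter isClosed_Icc) haS
    rintro x ⟨hxS, hxab⟩ y hy
    set y' := min y b with hy'
    have hxy' : x < y' := lt_min hy hxab.2
    have hIsub : Ioc x y' ⊆ Icc a b := fun t ht =>
      ⟨hxab.1.trans ht.1.le, ht.2.trans (min_le_right _ _)⟩
    have hne : (𝓝[Ioc x y'] x).NeBot := by
      refine mem_closure_iff_nhdsWithin_neBot.1 ?_
      rw [closure_Ioc hxy'.ne]
      exact left_mem_Icc.2 hxy'.le
    have hev : ∀ᶠ t in 𝓝[Ioc x y'] x, ∃ i, h t = G i t :=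
      eventually_mem_nhdsWithin.mono fun t ht => hsel t (hIsub ht)
    have hpigeon : ∃ i, ∃ᶠ t in 𝓝[Ioc x y'] x, h t = G i t := by
      by_contra hc
      push_neg at hc
      have hall : ∀ᶠ t in 𝓝[Ioc x y'] x, ∀ i, ¬ h t = G i t := eventually_all.2 hc
      obtain ⟨t, ⟨i, hi⟩, hni⟩ := (hev.and hall).exists
      exact hni i hi
    obtain ⟨i, hfreq⟩ := hpigeon
    have hGx : h x = G i x := by
      have htend : Filter.Tendsto (fun t => h t - G i t) (𝓝[Ioc x y'] x)
          (𝓝 (h x - G i x)) :=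
        ((hcont.tendsto x).sub ((hGcont i).tendsto x)).mono_left nhdsWithin_le_nhds
      have hfr : ∃ᶠ t in 𝓝[Ioc x y'] x, (fun t => h t - G i t) t ∈ ({0} : Set ℝ) := by
        refine hfreq.mono fun t ht => ?_
        simp [ht]
      have := mem_closure_of_frequently_of_tendsto hfr htend
      rw [closure_singleton, mem_singleton_iff, sub_eq_zero] at this
      exact this
    obtain ⟨t, hteq, htmem⟩ := (hfreq.and_eventually eventually_mem_nhdsWithin).exists
    refine ⟨t, ?_, htmem.1, htmem.2.trans (min_le_left _ _)⟩
    · -- t ∈ S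
      have h1 : |h t - h a| ≤ |h t - h x| + |h x - h a| := abs_sub_le _ _ _
      have h2 : |h t - h x| = |G i t - G i x| := by rw [hteq, hGx]
      have h3 : |G i t - G i x| ≤ L * |t - x| :=
        hlip i t (hIsub htmem) x ⟨hxab.1, hxab.2.le⟩
      have h4 : |t - x| = t - x := abs_of_pos (sub_pos.2 htmem.1)
      have h5 : |h x - h a| ≤ L * (x - a) := hxS
      have h3' : |G i t - G i x| ≤ L * (t - x) := by rw [← h4]; exact h3
      have h6 : L * (t - x) + L * (x - a) = L * (t - a) := by ring
      simp only [hS, mem_setOf_eq]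
      linarith
  have hbS : b ∈ S := hsub (right_mem_Icc.2 hab)
  exact hbS

/-- A continuous pointwise selection from finitely many `C¹` functions is Lipschitz on every
closed ball. -/
lemma selection_lipschitzOn_closedBall {d : ℕ} {ι : Type} [Fintype ι]
    {f : EuclideanSpace ℝ (Fin d) → ℝ} {g : ι → EuclideanSpace ℝ (Fin d) → ℝ}
    (hfc : Continuous f) (hg : ∀ i, ContDiff ℝ 1 (g i)) (hsel : ∀ x, ∃ i, f x = g i x)
    (R : ℝ) : ∃ C : NNReal, LipschitzOnWith C f (closedBall 0 R) := by
  -- each g i is Lipschitz on the closed ball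
  have hlipg : ∀ i, ∃ C : NNReal,
      LipschitzOnWith C (g i) (closedBall (0 : EuclideanSpace ℝ (Fin d)) R) := by
    intro i
    have hdiff : ∀ x, DifferentiableAt ℝ (g i) x := fun x => ((hg i).differentiable one_ne_zero) x
    have hfd : Continuous (fun x => fderiv ℝ (g i) x) := (hg i).continuous_fderiv one_ne_zero
    obtain ⟨M, hM⟩ :=
      (isCompact_closedBall (0 : EuclideanSpace ℝ (Fin d)) R).exists_bound_of_continuousOn
        hfd.continuousOn
    refine ⟨M.toNNReal, Convex.lipschitzOnWith_of_nnnorm_fderiv_le (fun x _ => hdiff x)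
      (fun x hx => ?_) (convex_closedBall _ _)⟩
    have h1 : ‖fderiv ℝ (g i) x‖ ≤ M := hM x hx
    have h2 : (‖fderiv ℝ (g i) x‖₊ : ℝ) ≤ (M.toNNReal : ℝ) := by
      rw [coe_nnnorm, Real.coe_toNNReal _ ((norm_nonneg _).trans h1)]
      exact h1
    exact_mod_cast h2
  choose C hC using hlipg
  set L : NNReal := Finset.univ.sup C with hL
  have hCL : ∀ i, LipschitzOnWith L (g i) (closedBall (0 : EuclideanSpace ℝ (Fin d)) R) :=
    fun i x hx y hy => (hC i hx hy).trans (mul_le_mul_left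
      (by exact_mod_cast Finset.le_sup (Finset.mem_univ i)) _)
  refine ⟨L, lipschitzOnWith_iff_dist_le_mul.2 fun x hx y hy => ?_⟩
  -- parametrize the segment from x to y
  set p : ℝ → EuclideanSpace ℝ (Fin d) := fun t => (1 - t) • x + t • y with hp
  have hpmem : ∀ t ∈ Icc (0 : ℝ) 1, p t ∈ closedBall (0 : EuclideanSpace ℝ (Fin d)) R :=
    fun t ht => (convex_closedBall _ _) hx hy (by linarith [ht.1, ht.2]) ht.1 (by ring)
  have hpcont : Continuous p := by
    apply Continuous.add
    · exact (continuous_const.sub continuous_id).smul continuous_const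
    · exact continuous_id.smul continuous_const
  have hpdist : ∀ s t : ℝ, dist (p s) (p t) = |s - t| * dist x y := by
    intro s t
    have h2 : p s - p t = (s - t) • (y - x) := by simp only [hp]; module
    rw [dist_eq_norm, h2, norm_smul, Real.norm_eq_abs, dist_eq_norm, norm_sub_rev]
  have hkey := selection_key1d (ι := ι) (h := fun t => f (p t)) (G := fun i t => g i (p t))
    (L := (L : ℝ) * dist x y) (a := 0) (b := 1) zero_le_one (hfc.comp hpcont)
    (fun i => ((hg i).continuous).comp hpcont) ?_ (fun t _ => hsel (p t))
  · have hp0 : p 0 = x := by simp [hp]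
    have hp1 : p 1 = y := by simp [hp]
    have hkey' : |f (p 1) - f (p 0)| ≤ (L : ℝ) * dist x y * (1 - 0) := hkey
    rw [hp0, hp1] at hkey'
    rw [Real.dist_eq, abs_sub_comm]
    calc |f y - f x| ≤ (L : ℝ) * dist x y * (1 - 0) := hkey'
      _ = (L : ℝ) * dist x y := by ring
  · intro i s hs t ht
    have h3 := (lipschitzOnWith_iff_dist_le_mul.1 (hCL i)) (p s) (hpmem s hs) (p t) (hpmem t ht)
    rw [Real.dist_eq] at h3
    calc |g i (p s) - g i (p t)| ≤ (L : ℝ) * dist (p s) (p t) := h3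
      _ = (L : ℝ) * (|s - t| * dist x y) := by rw [hpdist]
      _ = (L : ℝ) * dist x y * |s - t| := by ring

/-- Every piecewise smooth function `f : ℝ^d → ℝ` is differentiable at
Lebesgue-almost every point: the set of points of non-differentiability has
`d`-dimensional Lebesgue measure zero. -/
theorem piecewiseSmooth_ae_differentiable (d : ℕ) (f : EuclideanSpace ℝ (Fin d) → ℝ)
    (hf : PiecewiseSmooth f) :
    volume {x : EuclideanSpace ℝ (Fin d) | ¬ DifferentiableAt ℝ f x} = 0 := by
  obtain ⟨hfc, ι, fin, g, hg, hsel⟩ := hf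
  haveI := fin
  set S : Set (EuclideanSpace ℝ (Fin d)) := {x | ¬ DifferentiableAt ℝ f x} with hSdef
  have key : ∀ n : ℕ, volume (S ∩ ball 0 (n : ℝ)) = 0 := by
    intro n
    obtain ⟨C, hC⟩ := selection_lipschitzOn_closedBall hfc hg hsel (n : ℝ)
    have hae : ∀ᵐ x ∂(volume : Measure (EuclideanSpace ℝ (Fin d))),
        x ∈ closedBall (0 : EuclideanSpace ℝ (Fin d)) (n : ℝ) →
          DifferentiableWithinAt ℝ f (closedBall 0 (n : ℝ)) x :=
      hC.ae_differentiableWithinAt_of_mem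
    have hnull := ae_iff.1 hae
    refine measure_mono_null ?_ hnull
    intro x hx
    simp only [mem_setOf_eq, not_forall]
    refine ⟨ball_subset_closedBall hx.2, fun hdw => hx.1 ?_⟩
    exact hdw.differentiableAt (Filter.mem_of_superset (isOpen_ball.mem_nhds hx.2)
      ball_subset_closedBall)
  have hcover : S ⊆ ⋃ n : ℕ, S ∩ ball 0 (n : ℝ) := by
    intro x hx
    obtain ⟨n, hn⟩ := exists_nat_gt ‖x‖
    exact Set.mem_iUnion.2 ⟨n, hx, by simpa [mem_ball_zero_iff] using hn⟩
  exact measure_mono_null hcover (measure_iUnion_null key)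
end

section
/- Let x_1, …, x_N be time series with x_i ∈ ℝ^{k_i} and 1 ≤ k_i ≤ n, fix an elasticity m ≥ 1, and define F : ℝ^{n×m} → ℝ by F(Y) = Σ_{i=1}^N min_{φ ∈ P(k_i,m)} ‖x_i⊗_φY − Y‖². If Y ∈ ℝ^{n×m} is a matrix all of whose n rows equal y ∈ ℝ^m, then F(Y) = Σ_{i=1}^N d(x_i, y)², the sum of squared DTW distances of the x_i to y. -/
lemma frob_sq_eq (n m k : ℕ) (hkn : k ≤ n) (x : Fin k → ℝ) (y : Fin m → ℝ)
    (φ : List (ℕ × ℕ)) (hφ : φ ∈ WarpingPaths k m) :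
    frobNorm (embed x φ (fun _ : Fin n => y) - fun _ : Fin n => y) ^ 2
      = ∑ t ∈ φ.toFinset, (nth x (t.1 - 1) - nth y (t.2 - 1)) ^ 2 := by
  obtain ⟨-, -, hB, -⟩ := hφ
  have hD : ∀ (i : Fin n) (j : Fin m),
      ((embed x φ (fun _ : Fin n => y) - fun _ : Fin n => y) i j)
        = if ((i : ℕ) + 1, (j : ℕ) + 1) ∈ φ then nth x i - y j else 0 := by
    intro i j
    simp only [Pi.sub_apply, embed]
    split_ifs <;> simp
  have hinner : frobInner (embed x φ (fun _ : Fin n => y) - fun _ : Fin n => y)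
      (embed x φ (fun _ : Fin n => y) - fun _ : Fin n => y)
      = ∑ i : Fin n, ∑ j : Fin m,
          (if ((i : ℕ) + 1, (j : ℕ) + 1) ∈ φ then (nth x i - y j) ^ 2 else 0) := by
    unfold frobInner
    refine Finset.sum_congr rfl fun i _ => Finset.sum_congr rfl fun j _ => ?_
    rw [hD i j]
    split_ifs <;> ring
  have hnonneg : 0 ≤ frobInner (embed x φ (fun _ : Fin n => y) - fun _ : Fin n => y)
      (embed x φ (fun _ : Fin n => y) - fun _ : Fin n => y) := by
    rw [hinner]
    refine Finset.sum_nonneg fun i _ => Finset.sum_nonneg fun j _ => ?_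
    split_ifs <;> positivity
  rw [frobNorm, Real.sq_sqrt hnonneg, hinner]
  rw [← Finset.sum_product']
  rw [← Finset.sum_filter (fun p : Fin n × Fin m => ((p.1 : ℕ) + 1, (p.2 : ℕ) + 1) ∈ φ)
    (fun p : Fin n × Fin m => (nth x p.1 - y p.2) ^ 2)]
  refine (Finset.sum_bij'
    (i := fun (t : ℕ × ℕ) (ht : t ∈ φ.toFinset) =>
      ((⟨t.1 - 1, by
          have := hB t (List.mem_toFinset.mp ht); omega⟩ : Fin n),
       (⟨t.2 - 1, by
          have := hB t (List.mem_toFinset.mp ht); omega⟩ : Fin m)))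
    (j := fun (p : Fin n × Fin m) _ => ((p.1 : ℕ) + 1, (p.2 : ℕ) + 1))
    ?_ ?_ ?_ ?_ ?_).symm
  · intro t ht
    have hb := hB t (List.mem_toFinset.mp ht)
    simp only [Finset.mem_filter, Finset.mem_product, Finset.mem_univ, true_and]
    have e1 : t.1 - 1 + 1 = t.1 := by omega
    have e2 : t.2 - 1 + 1 = t.2 := by omega
    rw [e1, e2]
    exact List.mem_toFinset.mp ht
  · intro p hp
    simp only [Finset.mem_filter] at hp
    exact List.mem_toFinset.mpr hp.2
  · intro t ht
    have hb := hB t (List.mem_toFinset.mp ht)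
    obtain ⟨t1, t2⟩ := t
    have hb1 : 1 ≤ t1 := hb.1
    have hb2 : 1 ≤ t2 := hb.2.2.1
    simp only [Prod.mk.injEq]
    exact ⟨by omega, by omega⟩
  · intro p hp
    simp [Prod.ext_iff, Fin.ext_iff]
  · intro t ht
    have hb := hB t (List.mem_toFinset.mp ht)
    simp only [nth]
    have h1 : t.1 - 1 < k := by omega
    have h2 : t.2 - 1 < m := by omega
    rw [dif_pos h1, dif_pos h2]

lemma key_eq (n m k : ℕ) (hm : 1 ≤ m) (hk1 : 1 ≤ k) (hkn : k ≤ n)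
    (x : Fin k → ℝ) (y : Fin m → ℝ) :
    sInf ((fun φ : List (ℕ × ℕ) =>
        frobNorm (embed x φ (fun _ : Fin n => y) - fun _ : Fin n => y) ^ 2) ''
      WarpingPaths k m) = dtw x y ^ 2 := by
  set g := fun φ : List (ℕ × ℕ) =>
    ∑ t ∈ φ.toFinset, (nth x (t.1 - 1) - nth y (t.2 - 1)) ^ 2 with hg
  have himg : (fun φ : List (ℕ × ℕ) =>
      frobNorm (embed x φ (fun _ : Fin n => y) - fun _ : Fin n => y) ^ 2) ''
      WarpingPaths k m = g '' WarpingPaths k m :=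
    Set.image_congr fun φ hφ => frob_sq_eq n m k hkn x y φ hφ
  have hne : (g '' WarpingPaths k m).Nonempty :=
    (warpingPaths_nonempty k m hk1 hm).image _
  have hbdd : BddBelow (g '' WarpingPaths k m) := by
    refine ⟨0, fun a ha => ?_⟩
    obtain ⟨φ, -, rfl⟩ := ha
    exact Finset.sum_nonneg fun t _ => sq_nonneg _
  have h0 : 0 ≤ sInf (g '' WarpingPaths k m) := by
    refine le_csInf hne fun a ha => ?_
    obtain ⟨φ, -, rfl⟩ := ha
    exact Finset.sum_nonneg fun t _ => sq_nonneg _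
  have hdtw : dtw x y = Real.sqrt (sInf (g '' WarpingPaths k m)) := by
    unfold dtw
    have himg2 : (fun φ : List (ℕ × ℕ) =>
        Real.sqrt (∑ t ∈ φ.toFinset, (nth x (t.1 - 1) - nth y (t.2 - 1)) ^ 2)) ''
        WarpingPaths k m = Real.sqrt '' (g '' WarpingPaths k m) := by
      rw [← Set.image_comp]
      rfl
    rw [himg2, ← Monotone.map_csInf_of_continuousAt
      (Real.continuous_sqrt.continuousAt)
      (fun a b hab => Real.sqrt_le_sqrt hab) hne hbdd]
  rw [himg, hdtw, Real.sq_sqrt h0]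

/-- For `F(Y) = Σ_{i=1}^N min_{φ ∈ P(k_i,m)} ‖x_i ⊗_φ Y − Y‖²`, if all
`n` rows of `Y` equal `y ∈ ℝ^m`, then `F(Y) = Σ_{i=1}^N d(x_i, y)²`, the sum of squared
DTW distances of the `x_i` to `y`. -/
theorem sum_min_embed_sq_dist_constRows_eq_sum_dtw_sq (n m N : ℕ) (hm : 1 ≤ m)
    (k : Fin N → ℕ) (hk1 : ∀ i, 1 ≤ k i) (hkn : ∀ i, k i ≤ n)
    (x : (i : Fin N) → Fin (k i) → ℝ) (y : Fin m → ℝ) :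
    ∑ i : Fin N,
        sInf ((fun φ : List (ℕ × ℕ) =>
            frobNorm (embed (x i) φ (fun _ : Fin n => y) - fun _ : Fin n => y) ^ 2) ''
          WarpingPaths (k i) m)
      = ∑ i : Fin N, dtw (x i) y ^ 2 := by
  refine Finset.sum_congr rfl fun i _ => ?_
  exact key_eq n m (k i) hm (hk1 i) (hkn i) (x i) y
end
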